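/- Let H be a complex Hilbert space, let A be a bounded, positive (hence self-adjoint), invertible operator on H, and let x ∈ H satisfy ‖A x‖ = ‖x‖ and ‖A⁻¹ x‖ = ‖x‖. Then A x = x. -/

import Mathlib

open ContinuousLinearMap

/-- Let `A` be a bounded, positive, invertible operator on a complex Hilbert
space `H` (with bounded two-sided inverse `B`), and let `x ∈ H` satisfy
`‖A x‖ = ‖x‖` and `‖A⁻¹ x‖ = ‖x‖`. Then `A x = x`. -/
theorem stmt_11 {H : Type*} [NormedAddCommGroup H] [InnerProductSpace ℂ H]
    [CompleteSpace H]
    (A B : H →L[ℂ] H)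
    (hA_pos : A.IsPositive)
    (hAB : A.comp B = ContinuousLinearMap.id ℂ H)
    (hBA : B.comp A = ContinuousLinearMap.id ℂ H)
    (x : H)
    (hx1 : ‖A x‖ = ‖x‖)
    (hx2 : ‖B x‖ = ‖x‖) :
    A x = x := by
  have hsa := hA_pos.1
  have hsymm : ∀ u v : H, (inner ℂ (A u) v : ℂ) = inner ℂ u (A v) :=
    fun u v => hsa u v
  have hABx : A (B x) = x := by
    have := congrArg (fun T : H →L[ℂ] H => T x) hAB
    simpa using this
  have hinner : (inner ℂ (A x) (B x) : ℂ) = inner ℂ x x := by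
    rw [hsymm x (B x), hABx]
  have hAB2 : A x = B x := by
    have hn : ‖A x - B x‖ ^ 2 = 0 := by
      rw [@norm_sub_sq ℂ]
      rw [hinner, hx1, hx2, inner_self_eq_norm_sq]
      ring
    have := pow_eq_zero_iff (n := 2) (by norm_num) |>.mp hn
    exact sub_eq_zero.mp (norm_eq_zero.mp this)
  have hA2 : A (A x) = x := by rw [hAB2, hABx]
  set y := A x - x with hy
  have hAy : A y + y = 0 := by
    simp only [hy, map_sub, hA2]
    abel
  have h1 : Complex.re (inner ℂ y (A y) : ℂ) + ‖y‖ ^ 2 = 0 := by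
    have : (inner ℂ y (A y + y) : ℂ) = 0 := by rw [hAy, inner_zero_right]
    rw [inner_add_right] at this
    have := congrArg Complex.re this
    rw [Complex.add_re, Complex.zero_re,
      show ((inner ℂ y y : ℂ)).re = ‖y‖ ^ 2 from @inner_self_eq_norm_sq ℂ _ _ _ _ y] at this
    exact this
  have h2 : 0 ≤ Complex.re (inner ℂ y (A y) : ℂ) := by
    have := hA_pos.2 y
    rw [reApplyInnerSelf] at this
    rw [← inner_conj_symm, Complex.conj_re]
    simpa using this
  have hyzero : y = 0 := by
    have : ‖y‖ ^ 2 ≤ 0 := by linarith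
    have : ‖y‖ = 0 := by nlinarith [norm_nonneg y]
    exact norm_eq_zero.mp this
  exact sub_eq_zero.mp hyzero
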